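/- Let a ≥ 1 and let u < v ≤ m₂ ≤ 2^a − 1 be natural numbers, where a run occupies positions (u, v] with length r = v − u and midpoint m₃ := ⌊(u + v)/2⌋, and m₂ is the midpoint of the next run. Then the run's power satisfies P(m₃, m₂) := min_{m₃ < i ≤ m₂} p(i) ≤ a − ⌊log₂ r⌋, where p(i) = (a − 1) − ν₂(i) and ⌊log₂ ·⌋ is the natural-number base-2 logarithm (Nat.log 2). That is, a run of size r has power at most log₂((n+1)/r) + 1 ≈ log₂(n/r). -/

import Mathlib

/-- The power of index `i` in an array of size `n = 2^a − 1`: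
`p(i) = (a − 1) − ν₂(i)`. -/
def indexPower (a i : ℕ) : ℕ := (a - 1) - padicValNat 2 i

/-- The power of the interval `(s, e]`: the minimum index power over `s < i ≤ e`. -/
noncomputable def intervalPower (a s e : ℕ) : ℕ := sInf (indexPower a '' Set.Ioc s e)

lemma intervalPower_le_of_mem (a s e i : ℕ) (h : i ∈ Set.Ioc s e) :
    intervalPower a s e ≤ indexPower a i :=
  Nat.sInf_le ⟨i, h, rfl⟩

/-- A run of size `r = v − u` occupying positions `(u, v]`, with midpoint
`m₃ = ⌊(u+v)/2⌋` and next run's midpoint `m₂`, has power at most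
`a − ⌊log₂ r⌋ ≈ log₂(n/r)`. -/
theorem run_power_le_log (a u v m₂ : ℕ) (ha : 1 ≤ a) (huv : u < v)
    (hvm : v ≤ m₂) (hm : m₂ ≤ 2 ^ a - 1) :
    intervalPower a ((u + v) / 2) m₂ ≤ a - Nat.log 2 (v - u) := by
  set m₃ := (u + v) / 2 with hm₃
  set r := v - u with hr
  set L := Nat.log 2 r with hL
  have hm₃v : m₃ < v := by omega
  rcases Nat.eq_zero_or_pos L with hL0 | hLpos
  · -- take i = v
    have h1 : intervalPower a m₃ m₂ ≤ indexPower a v :=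
      intervalPower_le_of_mem a m₃ m₂ v ⟨hm₃v, hvm⟩
    have h2 : indexPower a v ≤ a - 1 := Nat.sub_le _ _
    omega
  · set k := L - 1 with hk
    have hrpos : 1 ≤ r := by omega
    have hpow : 2 ^ L ≤ r := Nat.pow_log_le_self 2 (by omega)
    have hk2 : 2 ^ k * 2 = 2 ^ L := by
      rw [hk, ← pow_succ]; congr 1; omega
    have hkr : 2 ^ k ≤ r / 2 := by
      rw [Nat.le_div_iff_mul_le (by norm_num)]; omega
    -- midpoint plus half the run fits before v
    have hhalf : m₃ + r / 2 ≤ v := by omega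
    set i := 2 ^ k * (m₃ / 2 ^ k + 1) with hi
    have hposk : 0 < 2 ^ k := Nat.pow_pos (by norm_num)
    have hdm := Nat.div_add_mod m₃ (2 ^ k)
    have hmod := Nat.mod_lt m₃ hposk
    have hieq : i = 2 ^ k * (m₃ / 2 ^ k) + 2 ^ k := by rw [hi]; ring
    have hgt : m₃ < i := by omega
    have hle : i ≤ m₂ := by omega
    have hval : k ≤ padicValNat 2 i := by
      have hne : i ≠ 0 := by omega
      have hdvd : (2 : ℕ) ^ k ∣ i := ⟨_, rfl⟩
      haveI : Fact (Nat.Prime 2) := ⟨Nat.prime_two⟩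
      exact (padicValNat_dvd_iff_le hne).mp hdvd
    have h1 : intervalPower a m₃ m₂ ≤ indexPower a i :=
      intervalPower_le_of_mem a m₃ m₂ i ⟨hgt, hle⟩
    have h2 : indexPower a i ≤ a - L := by
      unfold indexPower; omega
    omega
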